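/- For 2 < p < ∞, every bounded linear operator from ℓ_p (over a countably infinite index set) into a Hilbert space is compact. -/

import Mathlib

open scoped ENNReal
set_option linter.unusedSectionVars false
section
variable (p : ℝ≥0∞) [Fact (1 ≤ p)]

noncomputable def coordCLM (i : ℕ) : lp (fun _ : ℕ => ℝ) p →L[ℝ] ℝ :=
  LinearMap.mkContinuous
    { toFun := fun f => f i
      map_add' := fun f g => by simp [lp.coeFn_add]
      map_smul' := fun c f => by simp [lp.coeFn_smul] }
    1 (fun f => by
      have h : p ≠ 0 := by
        have : (1:ℝ≥0∞) ≤ p := Fact.out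
        positivity
      exact (show ‖f i‖ ≤ 1 * ‖f‖ by simpa using lp.norm_apply_le_norm h f i))

@[simp] lemma coordCLM_apply (i : ℕ) (f : lp (fun _ : ℕ => ℝ) p) : coordCLM p i f = f i := rfl

noncomputable def projCLM (K : ℕ) : lp (fun _ : ℕ => ℝ) p →L[ℝ] lp (fun _ : ℕ => ℝ) p :=
  ∑ i ∈ Finset.range K, (coordCLM p i).smulRight (lp.single p i 1)

lemma projCLM_apply (K : ℕ) (z : lp (fun _ : ℕ => ℝ) p) :
    projCLM p K z = ∑ i ∈ Finset.range K, lp.single p i (z i) := by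
  simp only [projCLM, ContinuousLinearMap.sum_apply, ContinuousLinearMap.smulRight_apply,
    coordCLM_apply]
  refine Finset.sum_congr rfl fun i _ => ?_
  rw [← lp.single_smul]
  norm_num

end
section
variable (p : ℝ≥0∞) [Fact (1 ≤ p)]

lemma sumSingle_coe (s : Finset ℕ) (f : ℕ → ℝ) (j : ℕ) :
    (∑ i ∈ s, lp.single p i (f i) : lp (fun _ : ℕ => ℝ) p) j
      = if j ∈ s then f j else 0 := by
  rw [lp.coeFn_sum, Finset.sum_apply]
  simp [lp.coeFn_sum, lp.single_apply, Finset.sum_apply, Finset.sum_dite_eq]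

variable {p}

lemma disjoint_norm_add (hq : 0 < p.toReal) (x y : lp (fun _ : ℕ => ℝ) p)
    (h : ∀ i, x i = 0 ∨ y i = 0) :
    ‖x + y‖ ^ p.toReal = ‖x‖ ^ p.toReal + ‖y‖ ^ p.toReal := by
  refine (lp.hasSum_norm hq (x + y)).unique ?_
  have h2 := (lp.hasSum_norm hq x).add (lp.hasSum_norm hq y)
  refine h2.congr_fun fun i => ?_
  have hxy : (x + y) i = x i + y i := by rw [lp.coeFn_add]; rfl
  rcases h i with h0 | h0 <;>
    simp [hxy, h0, Real.zero_rpow hq.ne', Real.norm_eq_abs]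

lemma norm_le_of_rpow_le (hq : 0 < p.toReal) {x y : lp (fun _ : ℕ => ℝ) p}
    (h : ‖x‖ ^ p.toReal ≤ ‖y‖ ^ p.toReal) : ‖x‖ ≤ ‖y‖ := by
  by_contra hc
  push_neg at hc
  exact absurd h (not_le.2 (Real.rpow_lt_rpow (norm_nonneg _) hc hq))

lemma norm_trunc_le (hq : 0 < p.toReal) (x : lp (fun _ : ℕ => ℝ) p) (s : Finset ℕ) :
    ‖(∑ i ∈ s, lp.single p i (x i) : lp (fun _ : ℕ => ℝ) p)‖ ≤ ‖x‖ := by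
  refine norm_le_of_rpow_le hq ?_
  rw [lp.norm_sum_single hq, lp.norm_rpow_eq_tsum hq]
  exact Summable.sum_le_tsum s (fun i _ => Real.rpow_nonneg (norm_nonneg _) _)
    ((lp.hasSum_norm hq x).summable)

lemma norm_compl_trunc_le (hq : 0 < p.toReal) (x : lp (fun _ : ℕ => ℝ) p) (s : Finset ℕ) :
    ‖x - ∑ i ∈ s, lp.single p i (x i)‖ ≤ ‖x‖ := by
  refine norm_le_of_rpow_le hq ?_
  rw [lp.norm_compl_sum_single hq]
  have : 0 ≤ ∑ i ∈ s, ‖x i‖ ^ p.toReal :=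
    Finset.sum_nonneg fun i _ => Real.rpow_nonneg (norm_nonneg _) _
  linarith

lemma trunc_tendsto (hp' : p ≠ ⊤) (x : lp (fun _ : ℕ => ℝ) p) :
    Filter.Tendsto (fun m => (∑ i ∈ Finset.range m, lp.single p i (x i) :
      lp (fun _ : ℕ => ℝ) p)) Filter.atTop (nhds x) := by
  have h := (lp.hasSum_single hp' x).tendsto_sum_nat
  exact h

end
section
variable {p : ℝ≥0∞} [Fact (1 ≤ p)]

lemma sum_disjoint_norm (hq : 0 < p.toReal) (x : ℕ → lp (fun _ : ℕ => ℝ) p) (N : ℕ)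
    (hd : ∀ j n, j < n → n < N → ∀ i, x j i = 0 ∨ x n i = 0)
    (hn : ∀ n, n < N → ‖x n‖ ≤ 1) :
    ‖(∑ n ∈ Finset.range N, x n : lp (fun _ : ℕ => ℝ) p)‖ ^ p.toReal ≤ N := by
  induction N with
  | zero => simp [Real.zero_rpow hq.ne']
  | succ k ih =>
    rw [Finset.sum_range_succ]
    have hdis : ∀ i, (∑ n ∈ Finset.range k, x n : lp (fun _ : ℕ => ℝ) p) i = 0 ∨ x k i = 0 := by
      intro i
      by_cases hxk : x k i = 0
      · exact Or.inr hxk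
      · left
        rw [lp.coeFn_sum, Finset.sum_apply]
        refine Finset.sum_eq_zero fun n hn' => ?_
        rcases hd n k (Finset.mem_range.1 hn') (Nat.lt_succ_self k) i with h | h
        · exact h
        · exact absurd h hxk
    rw [disjoint_norm_add hq _ _ hdis]
    have h1 : ‖x k‖ ^ p.toReal ≤ 1 :=
      Real.rpow_le_one (norm_nonneg _) (hn k (Nat.lt_succ_self k)) hq.le
    have h2 := ih (fun j n hj hn' i => hd j n hj (hn'.trans (Nat.lt_succ_self k)) i)
      (fun n hn' => hn n (hn'.trans (Nat.lt_succ_self k)))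
    push_cast
    linarith

lemma norm_sum_le_rpow (hq : 0 < p.toReal) (x : ℕ → lp (fun _ : ℕ => ℝ) p) (N : ℕ)
    (hd : ∀ j n, j < n → n < N → ∀ i, x j i = 0 ∨ x n i = 0)
    (hn : ∀ n, n < N → ‖x n‖ ≤ 1) :
    ‖(∑ n ∈ Finset.range N, x n : lp (fun _ : ℕ => ℝ) p)‖ ≤ (N : ℝ) ^ (p.toReal)⁻¹ := by
  have h := sum_disjoint_norm hq x N hd hn
  calc ‖(∑ n ∈ Finset.range N, x n : lp (fun _ : ℕ => ℝ) p)‖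
      = (‖(∑ n ∈ Finset.range N, x n : lp (fun _ : ℕ => ℝ) p)‖ ^ p.toReal) ^ (p.toReal)⁻¹ := by
        rw [Real.rpow_rpow_inv (norm_nonneg _) hq.ne']
    _ ≤ (N : ℝ) ^ (p.toReal)⁻¹ :=
        Real.rpow_le_rpow (Real.rpow_nonneg (norm_nonneg _) _) h (by positivity)
end
section
variable {p : ℝ≥0∞} [Fact (1 ≤ p)]

/-- Key gliding-hump lemma: continuous functionals on `ℓ_p` (p < ∞) are small on tails. -/
lemma tail_small (hp' : p ≠ ⊤) (hq2 : 1 < p.toReal)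
    (f : lp (fun _ : ℕ => ℝ) p →L[ℝ] ℝ) {ε : ℝ} (hε : 0 < ε) :
    ∃ K : ℕ, ∀ x : lp (fun _ : ℕ => ℝ) p, ‖x‖ ≤ 1 → (∀ i, i < K → x i = 0) → |f x| ≤ ε := by
  have hq : 0 < p.toReal := lt_trans one_pos hq2
  by_contra hc
  push_neg at hc
  -- build finite families of disjointly supported almost-norming vectors
  have key : ∀ N : ℕ, ∃ (x : ℕ → lp (fun _ : ℕ => ℝ) p) (M : ℕ),
      (∀ n, n < N → ‖x n‖ ≤ 1) ∧ (∀ n, n < N → ε / 2 ≤ f (x n)) ∧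
      (∀ n, n < N → ∀ i, M ≤ i → x n i = 0) ∧
      (∀ j n, j < n → n < N → ∀ i, x j i = 0 ∨ x n i = 0) := by
    intro N
    induction N with
    | zero => exact ⟨fun _ => 0, 0, by simp, by simp, by simp, by simp⟩
    | succ k ih =>
      obtain ⟨x, M, h1, h2, h3, h4⟩ := ih
      obtain ⟨y, hy1, hy2, hy3⟩ := hc M
      -- fix the sign
      set y' : lp (fun _ : ℕ => ℝ) p := if 0 ≤ f y then y else -y with hy'
      have hy'1 : ‖y'‖ ≤ 1 := by
        rw [hy']; split <;> simpa
      have hy'2 : ∀ i, i < M → y' i = 0 := by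
        intro i hi
        rw [hy']; split
        · exact hy2 i hi
        · rw [lp.coeFn_neg]; simp [hy2 i hi]
      have hy'3 : ε < f y' := by
        rcases le_or_gt 0 (f y) with h | h
        · rw [hy', if_pos h]; rwa [abs_of_nonneg h] at hy3
        · rw [hy', if_neg (not_le.2 h), map_neg]
          rw [abs_of_neg h] at hy3; linarith
      -- truncate
      have htt := (f.continuous.tendsto y').comp (trunc_tendsto hp' y')
      have hev : ∀ᶠ m in Filter.atTop,
          ε / 2 < f (∑ i ∈ Finset.range m, lp.single p i (y' i)) := by
        exact htt.eventually (eventually_gt_nhds (by linarith))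
      obtain ⟨m, hm⟩ := hev.exists
      set u : lp (fun _ : ℕ => ℝ) p := ∑ i ∈ Finset.range m, lp.single p i (y' i) with hu
      have hu_coe : ∀ i, u i = if i < m then y' i else 0 := by
        intro i; rw [hu, sumSingle_coe]; simp
      refine ⟨Function.update x k u, max M m, ?_, ?_, ?_, ?_⟩
      · intro n hn
        rcases Nat.lt_succ_iff_lt_or_eq.1 hn with h | h
        · rw [Function.update_of_ne h.ne]; exact h1 n h
        · subst h; rw [Function.update_self]
          exact le_trans (norm_trunc_le hq y' _) hy'1
      · intro n hn
        rcases Nat.lt_succ_iff_lt_or_eq.1 hn with h | h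
        · rw [Function.update_of_ne h.ne]; exact h2 n h
        · subst h; rw [Function.update_self]; exact le_of_lt hm
      · intro n hn i hi
        rcases Nat.lt_succ_iff_lt_or_eq.1 hn with h | h
        · rw [Function.update_of_ne h.ne]
          exact h3 n h i (le_trans (le_max_left _ _) hi)
        · subst h; rw [Function.update_self, hu_coe]
          rw [if_neg (by omega)]
      · intro j n hjn hn i
        rcases Nat.lt_succ_iff_lt_or_eq.1 hn with h | h
        · rw [Function.update_of_ne (by omega : j ≠ k), Function.update_of_ne h.ne]
          exact h4 j n hjn h i
        · subst h
          rw [Function.update_of_ne hjn.ne, Function.update_self]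
          by_cases hiM : i < M
          · right; rw [hu_coe]
            split_ifs with him
            · exact hy'2 i hiM
            · rfl
          · left; exact h3 j hjn i (le_of_not_gt hiM)
  -- final contradiction via growth comparison
  have hgrow : Filter.Tendsto (fun N : ℕ => (N : ℝ) ^ (1 - (p.toReal)⁻¹))
      Filter.atTop Filter.atTop := by
    have hpos : 0 < 1 - (p.toReal)⁻¹ := by
      have : (p.toReal)⁻¹ < 1 := by
        rw [inv_lt_one_iff₀]; right; exact hq2
      linarith
    exact (tendsto_rpow_atTop hpos).comp tendsto_natCast_atTop_atTop
  obtain ⟨N, hN, hN1⟩ :=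
    ((hgrow.eventually_gt_atTop (2 * ‖f‖ / ε)).and (Filter.eventually_ge_atTop 1)).exists
  obtain ⟨x, M, h1, h2, h3, h4⟩ := key N
  set z : lp (fun _ : ℕ => ℝ) p := ∑ n ∈ Finset.range N, x n with hz
  have hz1 : ‖z‖ ≤ (N : ℝ) ^ (p.toReal)⁻¹ := norm_sum_le_rpow hq x N h4 h1
  have hz2 : ε / 2 * N ≤ f z := by
    rw [hz, map_sum]
    calc ε / 2 * N = ∑ _n ∈ Finset.range N, ε / 2 := by
          rw [Finset.sum_const, Finset.card_range, nsmul_eq_mul]; ring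
      _ ≤ ∑ n ∈ Finset.range N, f (x n) :=
          Finset.sum_le_sum fun n hn => h2 n (Finset.mem_range.1 hn)
  have hz3 : f z ≤ ‖f‖ * ‖z‖ := by
    refine le_trans (le_abs_self _) ?_
    rw [← Real.norm_eq_abs]
    exact f.le_opNorm z
  have hNpos : 0 < (N : ℝ) := by exact_mod_cast hN1
  have hsplit : (N : ℝ) = (N : ℝ) ^ (p.toReal)⁻¹ * (N : ℝ) ^ (1 - (p.toReal)⁻¹) := by
    rw [← Real.rpow_add hNpos]; simp
  have hrp : (0:ℝ) < (N : ℝ) ^ (p.toReal)⁻¹ := Real.rpow_pos_of_pos hNpos _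
  have hfinal : ε / 2 * ((N : ℝ) ^ (p.toReal)⁻¹ * (N : ℝ) ^ (1 - (p.toReal)⁻¹))
      ≤ ‖f‖ * (N : ℝ) ^ (p.toReal)⁻¹ := by
    rw [← hsplit]
    exact le_trans hz2 (le_trans hz3 (by nlinarith [norm_nonneg f]))
  have : ε / 2 * (N : ℝ) ^ (1 - (p.toReal)⁻¹) ≤ ‖f‖ := by
    nlinarith
  rw [div_lt_iff₀ hε] at hN
  nlinarith
end

set_option maxHeartbeats 1000000
section
open scoped RealInnerProductSpace
variable {p : ℝ≥0∞} [Fact (1 ≤ p)]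
variable {H : Type*} [NormedAddCommGroup H] [InnerProductSpace ℝ H]

lemma tail_small_op (hp : 2 < p) (hp' : p < ⊤)
    (T : lp (fun _ : ℕ => ℝ) p →L[ℝ] H) {ε : ℝ} (hε : 0 < ε) :
    ∃ K : ℕ, ∀ x : lp (fun _ : ℕ => ℝ) p, ‖x‖ ≤ 1 → (∀ i, i < K → x i = 0) → ‖T x‖ ≤ ε := by
  have hq2' : (2:ℝ) < p.toReal := by
    have h2 : ((2:ℝ≥0∞)).toReal = (2:ℝ) := by simp
    rw [← h2]
    exact ENNReal.toReal_strict_mono hp'.ne hp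
  have hq : 0 < p.toReal := by linarith
  have hq2 : 1 < p.toReal := by linarith
  by_contra hc
  push_neg at hc
  have key : ∀ N : ℕ, ∃ (x : ℕ → lp (fun _ : ℕ => ℝ) p) (M : ℕ),
      (∀ n, n < N → ‖x n‖ ≤ 1) ∧ (∀ n, n < N → ε / 2 ≤ ‖T (x n)‖) ∧
      (∀ n, n < N → ∀ i, M ≤ i → x n i = 0) ∧
      (∀ j n, j < n → n < N → ∀ i, x j i = 0 ∨ x n i = 0) ∧
      (∀ j n, j < n → n < N →
        |⟪T (x j), T (x n)⟫| ≤ ε ^ 2 / 16 * (1/2) ^ n) := by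
    intro N
    induction N with
    | zero => exact ⟨fun _ => 0, 0, by simp, by simp, by simp, by simp, by simp⟩
    | succ k ih =>
      obtain ⟨x, M, h1, h2, h3, h4, h5⟩ := ih
      -- tail smallness of the functionals ⟪T (x j), T ·⟫
      have hfun : ∀ j : ℕ, ∃ K : ℕ, ∀ z : lp (fun _ : ℕ => ℝ) p, ‖z‖ ≤ 1 →
          (∀ i, i < K → z i = 0) → |⟪T (x j), T z⟫| ≤ ε ^ 2 / 16 * (1/2) ^ k := by
        intro j
        have hpos : (0:ℝ) < ε ^ 2 / 16 * (1/2) ^ k := by positivity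
        obtain ⟨K, hK⟩ := tail_small hp'.ne hq2 ((innerSL ℝ (T (x j))).comp T) hpos
        exact ⟨K, fun z hz1 hz2 => hK z hz1 hz2⟩
      choose Kf hKf using hfun
      set K : ℕ := max M ((Finset.range k).sup Kf) with hK
      obtain ⟨y, hy1, hy2, hy3⟩ := hc K
      -- truncate y
      have htt := ((T.continuous.tendsto y).comp (trunc_tendsto hp'.ne y)).norm
      have hev : ∀ᶠ m in Filter.atTop,
          ε / 2 < ‖T (∑ i ∈ Finset.range m, lp.single p i (y i))‖ :=
        htt.eventually (eventually_gt_nhds (by linarith))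
      obtain ⟨m, hm⟩ := hev.exists
      set u : lp (fun _ : ℕ => ℝ) p := ∑ i ∈ Finset.range m, lp.single p i (y i) with hu
      have hu_coe : ∀ i, u i = if i < m then y i else 0 := by
        intro i; rw [hu, sumSingle_coe]; simp
      have hu_low : ∀ i, i < K → u i = 0 := by
        intro i hi; rw [hu_coe]
        split_ifs with him
        · exact hy2 i hi
        · rfl
      have hu_norm : ‖u‖ ≤ 1 := le_trans (norm_trunc_le hq y _) hy1
      refine ⟨Function.update x k u, max M m, ?_, ?_, ?_, ?_, ?_⟩
      · intro n hn
        rcases Nat.lt_succ_iff_lt_or_eq.1 hn with h | h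
        · rw [Function.update_of_ne h.ne]; exact h1 n h
        · subst h; rw [Function.update_self]; exact hu_norm
      · intro n hn
        rcases Nat.lt_succ_iff_lt_or_eq.1 hn with h | h
        · rw [Function.update_of_ne h.ne]; exact h2 n h
        · subst h; rw [Function.update_self]; exact le_of_lt hm
      · intro n hn i hi
        rcases Nat.lt_succ_iff_lt_or_eq.1 hn with h | h
        · rw [Function.update_of_ne h.ne]
          exact h3 n h i (le_trans (le_max_left _ _) hi)
        · subst h; rw [Function.update_self, hu_coe, if_neg (by omega)]
      · intro j n hjn hn i
        rcases Nat.lt_succ_iff_lt_or_eq.1 hn with h | h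
        · rw [Function.update_of_ne (by omega : j ≠ k), Function.update_of_ne h.ne]
          exact h4 j n hjn h i
        · subst h
          rw [Function.update_of_ne hjn.ne, Function.update_self]
          by_cases hiM : i < M
          · exact Or.inr (hu_low i (lt_of_lt_of_le hiM (le_max_left _ _)))
          · exact Or.inl (h3 j hjn i (le_of_not_gt hiM))
      · intro j n hjn hn
        rcases Nat.lt_succ_iff_lt_or_eq.1 hn with h | h
        · rw [Function.update_of_ne (by omega : j ≠ k), Function.update_of_ne h.ne]
          exact h5 j n hjn h
        · have hjk : j < k := h ▸ hjn
          rw [h, Function.update_of_ne hjk.ne, Function.update_self]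
          refine hKf j u hu_norm fun i hi => hu_low i ?_
          calc i < Kf j := hi
            _ ≤ (Finset.range k).sup Kf := Finset.le_sup (Finset.mem_range.2 hjk)
            _ ≤ K := le_max_right _ _
  -- choose N large and derive a contradiction
  have hexp : 0 < 1 - 2 * (p.toReal)⁻¹ := by
    have h1 : 2 / p.toReal < 1 := (div_lt_one hq).2 hq2'
    rw [div_eq_mul_inv] at h1
    linarith
  have hgrow : Filter.Tendsto (fun N : ℕ => (N : ℝ) ^ (1 - 2 * (p.toReal)⁻¹))
      Filter.atTop Filter.atTop :=
    (tendsto_rpow_atTop hexp).comp tendsto_natCast_atTop_atTop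
  obtain ⟨N, hN, hN1⟩ :=
    ((hgrow.eventually_gt_atTop (16 * ‖T‖ ^ 2 / ε ^ 2)).and (Filter.eventually_ge_atTop 1)).exists
  obtain ⟨x, M, h1, h2, h3, h4, h5⟩ := key N
  set y : ℕ → H := fun n => T (x n) with hy
  set z : lp (fun _ : ℕ => ℝ) p := ∑ n ∈ Finset.range N, x n with hz
  have hNpos : (0:ℝ) < N := by exact_mod_cast hN1
  have hz1 : ‖z‖ ≤ (N : ℝ) ^ (p.toReal)⁻¹ := norm_sum_le_rpow hq x N h4 h1
  have hinner : ‖T z‖ ^ 2 = ∑ j ∈ Finset.range N, ∑ n ∈ Finset.range N, ⟪y j, y n⟫ := by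
    rw [← real_inner_self_eq_norm_sq, hz, map_sum, sum_inner]
    exact Finset.sum_congr rfl fun j _ => inner_sum _ _ _
  -- cross terms
  have hterm : ∀ j ∈ Finset.range N, ∀ n ∈ (Finset.range N).erase j,
      |⟪y j, y n⟫| ≤ (if n < j then (1/2:ℝ)^j * (ε^2/16) else 0) + (1/2:ℝ)^n * (ε^2/16) := by
    intro j hj n hn
    have hne : n ≠ j := Finset.ne_of_mem_erase hn
    have hnN : n < N := Finset.mem_range.1 (Finset.mem_of_mem_erase hn)
    have hjN : j < N := Finset.mem_range.1 hj
    rcases lt_or_gt_of_ne hne with hlt | hgt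
    · rw [if_pos hlt, real_inner_comm]
      have := h5 n j hlt hjN
      have h0 : (0:ℝ) ≤ (1/2:ℝ)^n * (ε^2/16) := by positivity
      calc |⟪y n, y j⟫| ≤ ε ^ 2 / 16 * (1/2)^j := this
        _ = (1/2:ℝ)^j * (ε^2/16) := by ring
        _ ≤ _ := by linarith
    · rw [if_neg (by omega)]
      have := h5 j n hgt hnN
      calc |⟪y j, y n⟫| ≤ ε ^ 2 / 16 * (1/2)^n := this
        _ = 0 + (1/2:ℝ)^n * (ε^2/16) := by ring
  have hcross : ∀ j ∈ Finset.range N,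
      |∑ n ∈ (Finset.range N).erase j, ⟪y j, y n⟫| ≤ 3 * (ε^2/16) := by
    intro j hj
    have hjN : j < N := Finset.mem_range.1 hj
    calc |∑ n ∈ (Finset.range N).erase j, ⟪y j, y n⟫|
        ≤ ∑ n ∈ (Finset.range N).erase j, |⟪y j, y n⟫| :=
          Finset.abs_sum_le_sum_abs _ _
      _ ≤ ∑ n ∈ (Finset.range N).erase j,
            ((if n < j then (1/2:ℝ)^j * (ε^2/16) else 0) + (1/2:ℝ)^n * (ε^2/16)) :=
          Finset.sum_le_sum (hterm j hj)
      _ ≤ ∑ n ∈ Finset.range N,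
            ((if n < j then (1/2:ℝ)^j * (ε^2/16) else 0) + (1/2:ℝ)^n * (ε^2/16)) := by
          refine Finset.sum_le_sum_of_subset_of_nonneg (Finset.erase_subset _ _)
            fun n _ _ => ?_
          have : (0:ℝ) ≤ (1/2:ℝ)^n * (ε^2/16) := by positivity
          split_ifs with h
          · positivity
          · linarith
      _ = (∑ n ∈ Finset.range N, if n < j then (1/2:ℝ)^j * (ε^2/16) else 0)
            + (∑ n ∈ Finset.range N, (1/2:ℝ)^n) * (ε^2/16) := by
          rw [Finset.sum_add_distrib, Finset.sum_mul]
      _ ≤ 1 * (ε^2/16) + 2 * (ε^2/16) := by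
          have e1 : (∑ n ∈ Finset.range N, if n < j then (1/2:ℝ)^j * (ε^2/16) else 0)
              = ∑ n ∈ Finset.range j, (1/2:ℝ)^j * (ε^2/16) := by
            rw [← Finset.sum_filter]
            congr 1
            ext n
            simp only [Finset.mem_filter, Finset.mem_range]
            omega
          rw [e1, Finset.sum_const, Finset.card_range, nsmul_eq_mul]
          have hj2 : (j:ℝ) * (1/2:ℝ)^j ≤ 1 := by
            have hj3 : (j:ℝ) ≤ 2 ^ j := by exact_mod_cast (Nat.lt_two_pow_self (n := j)).le
            have hp2 : (0:ℝ) < 2 ^ j := by positivity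
            rw [one_div, inv_pow, ← div_eq_mul_inv]
            exact (div_le_one hp2).2 hj3
          have hg : (∑ n ∈ Finset.range N, (1/2:ℝ)^n) ≤ 2 := sum_geometric_two_le N
          have hε2 : (0:ℝ) ≤ ε^2/16 := by positivity
          have := mul_le_mul_of_nonneg_right hg hε2
          nlinarith
      _ = 3 * (ε^2/16) := by ring
  -- lower bound for ‖T z‖²
  have hlower : (N:ℝ) * (ε^2/16) ≤ ‖T z‖ ^ 2 := by
    rw [hinner]
    calc (N:ℝ) * (ε^2/16) = ∑ _j ∈ Finset.range N, ε^2/16 := by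
          rw [Finset.sum_const, Finset.card_range, nsmul_eq_mul]
      _ ≤ ∑ j ∈ Finset.range N, ∑ n ∈ Finset.range N, ⟪y j, y n⟫ := by
          refine Finset.sum_le_sum fun j hj => ?_
          have hjN : j < N := Finset.mem_range.1 hj
          rw [← Finset.add_sum_erase _ _ hj, real_inner_self_eq_norm_sq]
          have hynorm : ε / 2 ≤ ‖y j‖ := h2 j hjN
          have hsq : (ε/2)^2 ≤ ‖y j‖^2 := by
            have := pow_le_pow_left₀ (by linarith : (0:ℝ) ≤ ε/2) hynorm 2
            simpa using this
          have hc := hcross j hj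
          have := neg_abs_le (∑ n ∈ (Finset.range N).erase j, ⟪y j, y n⟫)
          nlinarith
  -- upper bound and contradiction
  set A : ℝ := (N:ℝ) ^ (p.toReal)⁻¹ with hA
  have hApos : 0 < A := Real.rpow_pos_of_pos hNpos _
  have hup : ‖T z‖ ^ 2 ≤ ‖T‖ ^ 2 * A ^ 2 := by
    have h1' := T.le_opNorm z
    have h2' : ‖T z‖ ≤ ‖T‖ * A :=
      le_trans h1' (mul_le_mul_of_nonneg_left hz1 (norm_nonneg T))
    nlinarith [norm_nonneg (T z), norm_nonneg T]
  have hA2B : A ^ 2 * (N:ℝ) ^ (1 - 2 * (p.toReal)⁻¹) = N := by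
    rw [hA, ← Real.rpow_natCast ((N:ℝ) ^ (p.toReal)⁻¹) 2,
      ← Real.rpow_mul (Nat.cast_nonneg N), ← Real.rpow_add hNpos]
    push_cast
    rw [show (p.toReal⁻¹ * 2 + (1 - 2 * p.toReal⁻¹)) = 1 by ring, Real.rpow_one]
  set B : ℝ := (N:ℝ) ^ (1 - 2 * (p.toReal)⁻¹) with hB
  have hkey2 : ε^2/16 * B ≤ ‖T‖^2 := by
    have h16 : (ε^2/16 * B) * A^2 ≤ ‖T‖^2 * A^2 := by
      calc (ε^2/16 * B) * A^2 = (N:ℝ) * (ε^2/16) := by rw [← hA2B]; ring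
        _ ≤ ‖T z‖^2 := hlower
        _ ≤ ‖T‖^2 * A^2 := hup
    exact le_of_mul_le_mul_right h16 (by positivity)
  rw [div_lt_iff₀ (by positivity : (0:ℝ) < ε^2)] at hN
  nlinarith
end

section
variable {p : ℝ≥0∞} [Fact (1 ≤ p)]

lemma rankOne_compact {X Y : Type*} [NormedAddCommGroup X] [NormedSpace ℝ X]
    [NormedAddCommGroup Y] [NormedSpace ℝ Y]
    (g : X →L[ℝ] ℝ) (v : Y) : IsCompactOperator (g.smulRight v) := by
  refine ⟨(fun t : ℝ => t • v) '' Metric.closedBall 0 (‖g‖ + 1), ?_, ?_⟩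
  · exact (isCompact_closedBall 0 _).image (continuous_id.smul continuous_const)
  · refine Filter.mem_of_superset (Metric.ball_mem_nhds 0 one_pos) ?_
    intro z hz
    refine ⟨g z, ?_, rfl⟩
    rw [Metric.mem_closedBall, dist_zero_right, Real.norm_eq_abs]
    have h1 : |g z| ≤ ‖g‖ * ‖z‖ := by simpa using g.le_opNorm z
    have hz' : ‖z‖ < 1 := by simpa [Metric.mem_ball, dist_zero_right] using hz
    nlinarith [norm_nonneg g, norm_nonneg z]

lemma projCLM_isCompact (K : ℕ) : IsCompactOperator (projCLM p K) := by
  rw [projCLM]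
  induction (Finset.range K) using Finset.induction with
  | empty => simpa using isCompactOperator_zero
  | insert _ _ h ih =>
    rw [Finset.sum_insert h, ContinuousLinearMap.coe_add']
    exact (rankOne_compact _ _).add ih

lemma projCLM_coe (K : ℕ) (z : lp (fun _ : ℕ => ℝ) p) (i : ℕ) :
    (projCLM p K z) i = if i < K then z i else 0 := by
  rw [projCLM_apply, sumSingle_coe]
  simp

end

/-- For `2 < p < ∞`, every bounded linear operator from `ℓ_p` (countably infinite index set)
into a Hilbert space is compact. -/
theorem stmt0 (p : ℝ≥0∞) [Fact (1 ≤ p)] (hp : 2 < p) (hp' : p < ⊤)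
    (H : Type*) [NormedAddCommGroup H] [InnerProductSpace ℝ H] [CompleteSpace H]
    (T : lp (fun _ : ℕ => ℝ) p →L[ℝ] H) :
    IsCompactOperator T := by
  have hq : 0 < p.toReal := by
    refine ENNReal.toReal_pos ?_ hp'.ne
    intro h0
    rw [h0] at hp
    exact absurd hp (by simp)
  refine isCompactOperator_of_tendsto (l := Filter.atTop)
    (F := fun K : ℕ => T.comp (projCLM p K)) ?_ ?_
  · rw [Metric.tendsto_atTop]
    intro ε hε
    obtain ⟨K₀, hK₀⟩ := tail_small_op hp hp' T (half_pos hε)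
    have hscaled : ∀ w : lp (fun _ : ℕ => ℝ) p, (∀ i, i < K₀ → w i = 0) →
        ‖T w‖ ≤ ε / 2 * ‖w‖ := by
      intro w hw
      rcases eq_or_ne w 0 with rfl | hw0
      · simp
      · have hnw : 0 < ‖w‖ := norm_pos_iff.2 hw0
        set u := ‖w‖⁻¹ • w with hu
        have hu1 : ‖u‖ ≤ 1 := by
          rw [hu, norm_smul, norm_inv, norm_norm, inv_mul_cancel₀ hnw.ne']
        have hu2 : ∀ i, i < K₀ → u i = 0 := by
          intro i hi
          rw [hu, lp.coeFn_smul, Pi.smul_apply, hw i hi, smul_zero]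
        have := hK₀ u hu1 hu2
        have hTw : T w = ‖w‖ • T u := by
          rw [hu, map_smul, smul_smul, mul_inv_cancel₀ hnw.ne', one_smul]
        rw [hTw, norm_smul, norm_norm]
        calc ‖w‖ * ‖T u‖ ≤ ‖w‖ * (ε / 2) := by
              exact mul_le_mul_of_nonneg_left this hnw.le
          _ = ε / 2 * ‖w‖ := by ring
    refine ⟨K₀, fun K hK => ?_⟩
    rw [dist_eq_norm]
    have hbound : ‖T.comp (projCLM p K) - T‖ ≤ ε / 2 := by
      refine ContinuousLinearMap.opNorm_le_bound _ (by linarith) fun z => ?_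
      have heq : (T.comp (projCLM p K) - T) z = -(T (z - projCLM p K z)) := by
        simp [map_sub]
      rw [heq, norm_neg]
      set w := z - projCLM p K z with hwdef
      have hw0 : ∀ i, i < K₀ → w i = 0 := by
        intro i hi
        rw [hwdef, lp.coeFn_sub, Pi.sub_apply, projCLM_coe, if_pos (lt_of_lt_of_le hi hK),
          sub_self]
      have hwn : ‖w‖ ≤ ‖z‖ := by
        rw [hwdef, projCLM_apply]
        exact norm_compl_trunc_le hq z _
      calc ‖T w‖ ≤ ε / 2 * ‖w‖ := hscaled w hw0
        _ ≤ ε / 2 * ‖z‖ := mul_le_mul_of_nonneg_left hwn (by linarith)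
    linarith
  · refine Filter.Eventually.of_forall fun K => ?_
    have h := (projCLM_isCompact (p := p) K).continuous_comp T.continuous
    simpa [ContinuousLinearMap.coe_comp'] using h
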